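/- In the commutative monoid Q presented by ⟨x, z, a, b | x² = 1, a² = 1, z⁴ = z², b⁴ = b², abz = b, b³x = b², z³a = z²⟩, the product of any two elements of the set {b, x*b, z*b, x*z*b} lies in the ideal {b², x*b², z*b², x*z*b²}; moreover all such products modulo this ideal are equal (the Rees factor S₄/S₅ is a null semigroup). -/
import Mathlib


/-- In the misère quotient of 0.123, the product of any two elements of
`{b, xb, zb, xzb}` lies in the ideal `{b², xb², zb², xzb²}`. -/
theorem stmt16 {Q : Type*} [CommMonoid Q] (x z a b : Q)
    (hx : x ^ 2 = 1) (ha : a ^ 2 = 1) (hz : z ^ 4 = z ^ 2) (hb : b ^ 4 = b ^ 2)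
    (habz : a * b * z = b) (hbx : b ^ 3 * x = b ^ 2) (hza : z ^ 3 * a = z ^ 2) :
    ∀ u ∈ ({b, x * b, z * b, x * z * b} : Set Q),
      ∀ v ∈ ({b, x * b, z * b, x * z * b} : Set Q),
        u * v ∈ ({b ^ 2, x * b ^ 2, z * b ^ 2, x * z * b ^ 2} : Set Q) := by
  have hxx : x * x = 1 := by rw [← sq, hx]
  have haa : a * a = 1 := by rw [← sq, ha]
  have hzb : z * b = a * b := by
    have h := congrArg (a * ·) habz
    simp only [← mul_assoc] at h
    rw [haa, one_mul] at h
    rw [← h]; exact mul_comm _ _ |>.trans (by rw [mul_comm b z])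
  have hz2 : z * (z * (b * b)) = b * b := by
    calc z * (z * (b * b)) = (z * b) * (z * b) := by
          simp [mul_comm, mul_left_comm, mul_assoc]
      _ = (a * b) * (a * b) := by rw [hzb]
      _ = (a * a) * (b * b) := by simp [mul_comm, mul_left_comm, mul_assoc]
      _ = b * b := by rw [haa, one_mul]
  intro u hu v hv
  simp only [Set.mem_insert_iff, Set.mem_singleton_iff] at hu hv ⊢
  rcases hu with rfl | rfl | rfl | rfl <;> rcases hv with rfl | rfl | rfl | rfl <;>
    simp only [sq] <;>
    [skip; exact Or.inr (Or.inl (by simp [mul_comm, mul_left_comm, mul_assoc]));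
     exact Or.inr (Or.inr (Or.inl (by simp [mul_comm, mul_left_comm, mul_assoc])));
     exact Or.inr (Or.inr (Or.inr (by simp [mul_comm, mul_left_comm, mul_assoc])));
     exact Or.inr (Or.inl (by simp [mul_comm, mul_left_comm, mul_assoc]));
     skip;
     exact Or.inr (Or.inr (Or.inr (by simp [mul_comm, mul_left_comm, mul_assoc])));
     skip;
     exact Or.inr (Or.inr (Or.inl (by simp [mul_comm, mul_left_comm, mul_assoc])));
     exact Or.inr (Or.inr (Or.inr (by simp [mul_comm, mul_left_comm, mul_assoc])));
     skip;
     skip;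
     exact Or.inr (Or.inr (Or.inr (by simp [mul_comm, mul_left_comm, mul_assoc])));
     skip;
     skip;
     skip]
  · left; trivial
  · -- x*b*(x*b) = b*b
    exact Or.inl (by
      calc x * b * (x * b) = (x * x) * (b * b) := by
            simp [mul_comm, mul_left_comm, mul_assoc]
        _ = b * b := by rw [hxx, one_mul])
  · -- x*b*(x*z*b) = z*(b*b)
    exact Or.inr (Or.inr (Or.inl (by
      calc x * b * (x * z * b) = (x * x) * (z * (b * b)) := by
            simp [mul_comm, mul_left_comm, mul_assoc]
        _ = z * (b * b) := by rw [hxx, one_mul])))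
  · -- z*b*(z*b) = b*b
    exact Or.inl (by
      calc z * b * (z * b) = z * (z * (b * b)) := by
            simp [mul_comm, mul_left_comm, mul_assoc]
        _ = b * b := hz2)
  · -- z*b*(x*z*b) = x*(b*b)
    exact Or.inr (Or.inl (by
      calc z * b * (x * z * b) = x * (z * (z * (b * b))) := by
            simp [mul_comm, mul_left_comm, mul_assoc]
        _ = x * (b * b) := by rw [hz2]))
  · -- x*z*b*(x*b) = z*(b*b)
    exact Or.inr (Or.inr (Or.inl (by
      calc x * z * b * (x * b) = (x * x) * (z * (b * b)) := by
            simp [mul_comm, mul_left_comm, mul_assoc]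
        _ = z * (b * b) := by rw [hxx, one_mul])))
  · -- x*z*b*(z*b) = x*(b*b)
    exact Or.inr (Or.inl (by
      calc x * z * b * (z * b) = x * (z * (z * (b * b))) := by
            simp [mul_comm, mul_left_comm, mul_assoc]
        _ = x * (b * b) := by rw [hz2]))
  · -- x*z*b*(x*z*b) = b*b
    exact Or.inl (by
      calc x * z * b * (x * z * b) = (x * x) * (z * (z * (b * b))) := by
            simp [mul_comm, mul_left_comm, mul_assoc]
        _ = b * b := by rw [hxx, one_mul, hz2])
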